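/- arXiv:2312.07909 — 4 statements merged into one kernel-verified Lean document; each statement's English description precedes it below -/
import Mathlib

section
/- Two subgroups H₁, H₂ of O(n) are conjugate in GL_n(ℝ) if and only if they are conjugate in O(n). Specifically, if H₁ = g H₂ g⁻¹ for some g ∈ GL_n(ℝ), then writing a singular value decomposition g = V D Uᵀ with U, V ∈ O(n) and D positive diagonal, one has H₁ = g₂ H₂ g₂⁻¹ for some g₂ ∈ O(n). -/
open Matrix
open scoped MatrixOrder

/-- Two subgroups `H₁, H₂` of `O(n)` are conjugate in `GL_n(ℝ)` if and only
if they are conjugate in `O(n)`. -/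
theorem conjugate_in_GL_iff_conjugate_in_O (n : ℕ)
    (H₁ H₂ : Set (Matrix (Fin n) (Fin n) ℝ))
    (h₁O : ∀ A ∈ H₁, Aᵀ * A = 1) (h₂O : ∀ A ∈ H₂, Aᵀ * A = 1)
    (h₁one : (1 : Matrix (Fin n) (Fin n) ℝ) ∈ H₁)
    (h₁mul : ∀ A ∈ H₁, ∀ B ∈ H₁, A * B ∈ H₁)
    (h₁inv : ∀ A ∈ H₁, Aᵀ ∈ H₁)
    (h₂one : (1 : Matrix (Fin n) (Fin n) ℝ) ∈ H₂)
    (h₂mul : ∀ A ∈ H₂, ∀ B ∈ H₂, A * B ∈ H₂)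
    (h₂inv : ∀ A ∈ H₂, Aᵀ ∈ H₂) :
    (∃ g : Matrix (Fin n) (Fin n) ℝ, IsUnit g.det ∧
      H₁ = (fun A => g * A * g⁻¹) '' H₂) ↔
    (∃ g₂ : Matrix (Fin n) (Fin n) ℝ, g₂ᵀ * g₂ = 1 ∧
      H₁ = (fun A => g₂ * A * g₂ᵀ) '' H₂) := by
  constructor
  · rintro ⟨g, hg, hH⟩
    -- P = gᵀ g is positive semidefinite
    have hPsd : (gᵀ * g).PosSemidef := by
      have := Matrix.posSemidef_conjTranspose_mul_self g
      rwa [Matrix.conjTranspose_eq_transpose_of_trivial] at this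
    set S := CFC.sqrt (gᵀ * g) with hS
    have hSsd : S.PosSemidef := (CFC.sqrt_nonneg _).posSemidef
    have hSsq : S * S = gᵀ * g := CFC.sqrt_mul_sqrt_self _ hPsd.nonneg
    have hSsymm : Sᵀ = S := by
      have := hSsd.1.eq
      rwa [Matrix.conjTranspose_eq_transpose_of_trivial] at this
    -- S is invertible
    have hSdet : IsUnit S.det := by
      have hd : S.det * S.det = g.det * g.det := by
        have := congrArg Matrix.det hSsq
        simpa [Matrix.det_mul, Matrix.det_transpose] using this
      have : IsUnit (S.det * S.det) := hd ▸ (by simpa using hg.mul hg)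
      exact (isUnit_of_mul_isUnit_left this)
    -- key commutation: S commutes with every A ∈ H₂
    have hcomm : ∀ A ∈ H₂, S * A = A * S := by
      intro A hA
      have hAO : Aᵀ * A = 1 := h₂O A hA
      have hAOr : A * Aᵀ = 1 := mul_eq_one_comm.mp hAO
      -- g A g⁻¹ ∈ H₁, so it's orthogonal
      have hgA : g * A * g⁻¹ ∈ H₁ := hH ▸ ⟨A, hA, rfl⟩
      have horth := h₁O _ hgA
      -- deduce Aᵀ (gᵀ g) A = gᵀ g
      have hkey : Aᵀ * (gᵀ * g) * A = gᵀ * g := by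
        have h1 : (g * A * g⁻¹)ᵀ * (g * A * g⁻¹) = 1 := horth
        have h2 : g⁻¹ᵀ * (Aᵀ * (gᵀ * g) * A) * g⁻¹ = 1 := by
          rw [← h1]; simp only [Matrix.transpose_mul]; noncomm_ring
        
        have hgl : gᵀ * g⁻¹ᵀ = 1 := by
          rw [← Matrix.transpose_mul, Matrix.nonsing_inv_mul g hg,
            Matrix.transpose_one]
        have hgr : g⁻¹ * g = 1 := Matrix.nonsing_inv_mul g hg
        calc Aᵀ * (gᵀ * g) * A
            = (gᵀ * g⁻¹ᵀ) * (Aᵀ * (gᵀ * g) * A) * (g⁻¹ * g) := by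
              rw [hgl, hgr, Matrix.one_mul, Matrix.mul_one]
          _ = gᵀ * (g⁻¹ᵀ * (Aᵀ * (gᵀ * g) * A) * g⁻¹) * g := by
              noncomm_ring
          _ = gᵀ * g := by rw [h2, Matrix.mul_one]
      -- Aᵀ S A is a psd square root of gᵀ g
      have hconj : (Aᵀ * S * A).PosSemidef := by
        have := hSsd.conjTranspose_mul_mul_same A
        rwa [Matrix.conjTranspose_eq_transpose_of_trivial] at this
      have hconjsq : (Aᵀ * S * A) ^ 2 = gᵀ * g := by
        rw [pow_two]
        calc (Aᵀ * S * A) * (Aᵀ * S * A)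
            = Aᵀ * S * (A * Aᵀ) * S * A := by noncomm_ring
          _ = Aᵀ * (S * S) * A := by rw [hAOr]; noncomm_ring
          _ = gᵀ * g := by rw [hSsq, hkey]
      have heq : Aᵀ * S * A = S := (CFC.sqrt_unique (by rw [← pow_two]; exact hconjsq) hconj.nonneg).symm
      calc S * A = A * (Aᵀ * S * A) := by
            rw [← Matrix.mul_assoc, ← Matrix.mul_assoc, hAOr, Matrix.one_mul]
        _ = A * S := by rw [heq]
    -- define g₂ = g * S⁻¹
    have hSinv : S * S⁻¹ = 1 := Matrix.mul_nonsing_inv S hSdet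
    have hSinv' : S⁻¹ * S = 1 := Matrix.nonsing_inv_mul S hSdet
    have hSinvT : S⁻¹ᵀ = S⁻¹ := by rw [Matrix.transpose_nonsing_inv, hSsymm]
    have hortho : (g * S⁻¹)ᵀ * (g * S⁻¹) = 1 := by
      calc (g * S⁻¹)ᵀ * (g * S⁻¹) = S⁻¹ * (gᵀ * g) * S⁻¹ := by
            rw [Matrix.transpose_mul, hSinvT]; noncomm_ring
        _ = S⁻¹ * (S * S) * S⁻¹ := by rw [hSsq]
        _ = (S⁻¹ * S) * (S * S⁻¹) := by noncomm_ring
        _ = 1 := by rw [hSinv', hSinv, Matrix.mul_one]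
    have hg2T : (g * S⁻¹)ᵀ = S * g⁻¹ := by
      have h1 : (S * g⁻¹) * (g * S⁻¹) = 1 := by
        calc (S * g⁻¹) * (g * S⁻¹) = S * (g⁻¹ * g) * S⁻¹ := by noncomm_ring
          _ = 1 := by rw [Matrix.nonsing_inv_mul g hg, Matrix.mul_one, hSinv]
      rw [← Matrix.inv_eq_left_inv hortho, ← Matrix.inv_eq_left_inv h1]
    refine ⟨g * S⁻¹, hortho, ?_⟩
    · rw [hH]
      apply Set.image_congr
      intro A hA
      have hSinvT : S⁻¹ᵀ = S⁻¹ := by rw [Matrix.transpose_nonsing_inv, hSsymm]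
      have hcommInv : S⁻¹ * A = A * S⁻¹ := by
        calc S⁻¹ * A = S⁻¹ * A * (S * S⁻¹) := by rw [hSinv, Matrix.mul_one]
          _ = S⁻¹ * (A * S) * S⁻¹ := by noncomm_ring
          _ = S⁻¹ * (S * A) * S⁻¹ := by rw [hcomm A hA]
          _ = (S⁻¹ * S) * (A * S⁻¹) := by noncomm_ring
          _ = A * S⁻¹ := by rw [hSinv', Matrix.one_mul]
      show g * A * g⁻¹ = g * S⁻¹ * A * (g * S⁻¹)ᵀ
      rw [hg2T]
      calc g * A * g⁻¹ = g * A * (S⁻¹ * S) * g⁻¹ := by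
            rw [hSinv', Matrix.mul_one]
        _ = g * (A * S⁻¹) * S * g⁻¹ := by noncomm_ring
        _ = g * (S⁻¹ * A) * S * g⁻¹ := by rw [hcommInv]
        _ = g * S⁻¹ * A * (S * g⁻¹) := by noncomm_ring
  · rintro ⟨g₂, hg₂, hH⟩
    have hdet : IsUnit g₂.det := by
      have : g₂.det * g₂.det = 1 := by
        have := congrArg Matrix.det hg₂
        simpa [Matrix.det_mul, Matrix.det_transpose] using this
      exact IsUnit.of_mul_eq_one _ this
    have hinv : g₂⁻¹ = g₂ᵀ := Matrix.inv_eq_left_inv hg₂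
    exact ⟨g₂, hdet, by rw [hinv]; exact hH⟩
end

section
/- For any odd prime p, the reduction map GL_n(ℤ) → GL_n(ℤ/pℤ) is injective on every finite subgroup of GL_n(ℤ). Equivalently, if g ∈ GL_n(ℤ) has finite order and g ≡ I (mod p) for a prime p ≠ 2, then g = I. -/
open Finset

/-- Entries of `M ^ m` are divisible by `d ^ m` if entries of `M` are divisible by `d`. -/
lemma pow_entry_dvd {n : ℕ} (M : Matrix (Fin n) (Fin n) ℤ) (d : ℤ)
    (hM : ∀ i j, d ∣ M i j) : ∀ m, 1 ≤ m → ∀ i j, d ^ m ∣ (M ^ m) i j := by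
  intro m
  induction m with
  | zero => omega
  | succ m ih =>
    intro _ i j
    rcases Nat.eq_or_lt_of_le (Nat.one_le_iff_ne_zero.mpr (Nat.succ_ne_zero m)) with h | h
    · rcases Nat.succ_injective (by omega : m + 1 = 0 + 1) with rfl
      simpa using hM i j
    · have hm : 1 ≤ m := by omega
      rw [pow_succ, pow_succ, Matrix.mul_apply]
      exact Finset.dvd_sum fun k _ => mul_dvd_mul (ih hm i k) (hM k j)

lemma step_lemma (p : ℕ) (hp : p.Prime) (hp2 : p ≠ 2) (q : ℕ) (hq : q.Prime)
    {n : ℕ} (M : Matrix (Fin n) (Fin n) ℤ) (a : ℕ) (ha : 1 ≤ a)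
    (hM : ∀ i j, (p : ℤ) ^ a ∣ M i j) (hpow : (1 + M) ^ q = 1) :
    ∀ i j, (p : ℤ) ^ (a + 1) ∣ M i j := by
  obtain ⟨r, rfl⟩ : ∃ r, q = r + 2 := ⟨q - 2, by have := hq.two_le; omega⟩
  have hbin := (Commute.one_left M).add_pow (r + 2)
  rw [hpow] at hbin
  rw [Finset.sum_range_succ, Finset.sum_range_succ] at hbin
  -- last term is 1, second-to-last is M * (r+2)
  simp only [Nat.sub_self, pow_zero, one_pow, Nat.choose_self, Nat.cast_one, mul_one,
    one_mul] at hbin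
  have h1 : (r + 2) - (r + 1) = 1 := by omega
  rw [h1, pow_one, Nat.choose_succ_self_right] at hbin
  -- hbin : 1 = S + M * ↑(r+1+1) + 1
  have h0 : (∑ m ∈ range (r + 1), M ^ (r + 2 - m) * ((r + 2).choose m : Matrix (Fin n) (Fin n) ℤ))
      + M * ((r + 1 + 1 : ℕ) : Matrix (Fin n) (Fin n) ℤ) = 0 :=
    add_eq_right.mp hbin.symm
  have key : M * ((r + 1 + 1 : ℕ) : Matrix (Fin n) (Fin n) ℤ)
      = -(∑ m ∈ range (r + 1), M ^ (r + 2 - m) * ((r + 2).choose m : Matrix (Fin n) (Fin n) ℤ)) :=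
    eq_neg_of_add_eq_zero_right h0
  intro i j
  -- entrywise
  have hentry : ((r + 2 : ℕ) : ℤ) * M i j
      = -(∑ m ∈ range (r + 1), (M ^ (r + 2 - m)) i j * ((r + 2).choose m : ℤ)) := by
    have := congrArg (fun A => A i j) key
    simp only [Matrix.neg_apply, Matrix.sum_apply] at this
    rw [← Matrix.diagonal_natCast, Matrix.mul_diagonal] at this
    simp only [← Matrix.diagonal_natCast] at this
    simp only [Matrix.mul_diagonal] at this
    push_cast at this ⊢
    rw [mul_comm] at this
    exact this
  -- divisibility of each term
  have hp3 : 3 ≤ p := by have := hp.two_le; omega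
  have hMp : ∀ m, 2 ≤ m → ∀ i' j' : Fin n, (p : ℤ) ^ (2 * a) ∣ (M ^ m) i' j' := by
    intro m hm i' j'
    refine dvd_trans (pow_dvd_pow _ (by nlinarith : 2 * a ≤ a * m)) ?_
    rw [pow_mul]
    exact pow_entry_dvd M _ hM m (by omega) i' j'
  by_cases hqp : r + 2 = p
  · -- q = p case : each term divisible by p^(2a+1)
    subst hqp
    have hr1 : 1 ≤ r := by omega
    have hdvd : ((r + 2 : ℕ) : ℤ) ^ (2 * a + 1) ∣ ((r + 2 : ℕ) : ℤ) * M i j := by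
      rw [hentry, dvd_neg]
      refine Finset.dvd_sum fun m hm => ?_
      simp only [Finset.mem_range] at hm
      rcases Nat.eq_zero_or_pos m with rfl | hm0
      · refine Dvd.dvd.mul_right ?_ _
        have har : 1 * 1 ≤ a * r := Nat.mul_le_mul ha hr1
        refine dvd_trans (pow_dvd_pow _
          (by simp only [Nat.sub_zero]; nlinarith : 2 * a + 1 ≤ a * (r + 2 - 0))) ?_
        rw [pow_mul]
        exact pow_entry_dvd M _ hM _ (by omega) i j
      · have h1 : ((r + 2 : ℕ) : ℤ) ^ (2 * a) ∣ (M ^ (r + 2 - m)) i j := hMp _ (by omega) i j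
        have h2 : ((r + 2 : ℕ) : ℤ) ∣ ((r + 2).choose m : ℤ) :=
          Int.natCast_dvd_natCast.mpr (hq.dvd_choose_self (by omega) (by omega))
        push_cast at h2
        rw [pow_succ]
        exact mul_dvd_mul h1 (by exact_mod_cast h2)
    rw [show 2 * a + 1 = 1 + 2 * a by ring, pow_add, pow_one] at hdvd
    have h3 : ((r + 2 : ℕ) : ℤ) ^ (2 * a) ∣ M i j :=
      (mul_dvd_mul_iff_left (by exact_mod_cast hp.ne_zero : ((r + 2 : ℕ) : ℤ) ≠ 0)).mp hdvd
    exact dvd_trans (pow_dvd_pow _ (by omega)) h3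
  · -- q ≠ p case
    have hdvd : (p : ℤ) ^ (2 * a) ∣ ((r + 2 : ℕ) : ℤ) * M i j := by
      rw [hentry, dvd_neg]
      refine Finset.dvd_sum fun m hm => ?_
      simp only [Finset.mem_range] at hm
      exact Dvd.dvd.mul_right (hMp _ (by omega) i j) _
    have hcop : IsCoprime ((p : ℤ) ^ (a + 1)) ((r + 2 : ℕ) : ℤ) := by
      have : Nat.Coprime (p ^ (a + 1)) (r + 2) :=
        Nat.Coprime.pow_left _ (((Nat.coprime_primes hp hq).mpr (fun h => hqp h.symm)))
      exact_mod_cast Nat.isCoprime_iff_coprime.mpr this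
    have := dvd_trans (pow_dvd_pow ((p : ℤ)) (by omega : a + 1 ≤ 2 * a)) hdvd
    exact hcop.dvd_of_dvd_mul_left this

/-- Minkowski's theorem (1887): for any prime `p ≠ 2`, the reduction map
`GL_n(ℤ) → GL_n(ℤ/pℤ)` is injective on finite subgroups; equivalently, if
`g ∈ GL_n(ℤ)` has finite order and `g ≡ I (mod p)`, then `g = I`. -/
theorem minkowski_reduction_injective (n p : ℕ) (hp : p.Prime) (hp2 : p ≠ 2)
    (g : Matrix (Fin n) (Fin n) ℤ) (hg : IsUnit g.det)
    (k : ℕ) (hk : 0 < k) (hgk : g ^ k = 1)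
    (hcong : g.map (Int.cast : ℤ → ZMod p) = 1) :
    g = 1 := by
  clear hg
  induction k using Nat.strong_induction_on generalizing g with
  | _ k ih =>
    rcases Nat.lt_or_ge k 2 with h2 | h2
    · have : k = 1 := by omega
      subst this
      rwa [pow_one] at hgk
    · set q := k.minFac with hqdef
      have hq : q.Prime := Nat.minFac_prime (by omega)
      set m := k / q with hmdef
      have hkm : m * q = k := Nat.div_mul_cancel k.minFac_dvd
      have hmlt : m < k := Nat.div_lt_self hk hq.one_lt
      have hmpos : 0 < m :=
        Nat.div_pos (Nat.le_of_dvd hk k.minFac_dvd) hq.pos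
      have hgm : (g ^ m) ^ q = 1 := by rw [← pow_mul, hkm, hgk]
      -- congruence for g ^ m
      have hcongm : (g ^ m).map (Int.cast : ℤ → ZMod p) = 1 := by
        have : (Int.castRingHom (ZMod p)).mapMatrix (g ^ m)
            = ((Int.castRingHom (ZMod p)).mapMatrix g) ^ m := map_pow _ _ _
        have hg1 : (Int.castRingHom (ZMod p)).mapMatrix g = 1 := hcong
        rw [hg1, one_pow] at this
        exact this
      set M : Matrix (Fin n) (Fin n) ℤ := g ^ m - 1 with hMdef
      have h1M : 1 + M = g ^ m := by rw [hMdef]; abel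
      have hM1 : ∀ i j, (p : ℤ) ^ 1 ∣ M i j := by
        intro i j
        rw [pow_one, ← ZMod.intCast_zmod_eq_zero_iff_dvd]
        have hmap : (Int.castRingHom (ZMod p)).mapMatrix M = 0 := by
          rw [hMdef, map_sub, map_one]
          rw [show (Int.castRingHom (ZMod p)).mapMatrix (g ^ m)
            = (g ^ m).map (Int.cast : ℤ → ZMod p) from rfl, hcongm, sub_self]
        have := congrArg (fun A => A i j) hmap
        simpa using this
      have hall : ∀ a, 1 ≤ a → ∀ i j, (p : ℤ) ^ a ∣ M i j := by
        intro a
        induction a with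
        | zero => omega
        | succ a iha =>
          intro _
          rcases Nat.eq_zero_or_pos a with rfl | ha
          · exact hM1
          · exact step_lemma p hp hp2 q hq M a ha (iha ha) (by rw [h1M]; exact hgm)
      have hM0 : M = 0 := by
        ext i j
        by_contra hne
        set t := (M i j).natAbs with htdef
        have ht1 : 1 ≤ t := by
          rcases Nat.eq_zero_or_pos t with h | h
          · exact absurd (Int.natAbs_eq_zero.mp (htdef ▸ h)) hne
          · exact h
        have hle : (p : ℤ) ^ t ≤ |M i j| :=
          Int.le_of_dvd (abs_pos.mpr hne) ((dvd_abs _ _).mpr (hall t ht1 i j))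
        have habs : |M i j| = (t : ℤ) := by rw [htdef]; exact (Int.abs_eq_natAbs _)
        have hlt : (t : ℤ) < (p : ℤ) ^ t := by
          exact_mod_cast (Nat.lt_pow_self hp.one_lt : t < p ^ t)
        rw [habs] at hle
        linarith
      have hgm1 : g ^ m = 1 := by
        have := sub_eq_zero.mp (hMdef ▸ hM0)
        exact this
      exact ih m hmlt g hmpos hgm1 hcong
end

section
/- For n ≤ 3, a positive definite symmetric S ∈ Sⁿ_{≻0} is Selling-reduced (i.e., Venkov-reduced with respect to A_n) if and only if all off-diagonal entries of the extended matrix S̃ are non-positive. -/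
open Matrix

/-- The matrix `A_n` with diagonal entries 2 and off-diagonal entries 1. -/
def matA (n : ℕ) : Matrix (Fin n) (Fin n) ℝ :=
  Matrix.of fun i j => if i = j then (2 : ℝ) else 1

/-- The matrix `P = (I_n | −𝟙)` so that `S̃ = Pᵀ S P` is the Gram matrix
of `b₁, …, b_n, −b₁ − ⋯ − b_n`. -/
def matP (n : ℕ) : Matrix (Fin n) (Fin (n + 1)) ℝ :=
  Matrix.of fun i j => if (j : ℕ) = n then -1 else if (i : ℕ) = (j : ℕ) then 1 else 0

/-- The extended `(n+1)×(n+1)` Gram matrix `S̃`. -/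
def extended {n : ℕ} (S : Matrix (Fin n) (Fin n) ℝ) :
    Matrix (Fin (n + 1)) (Fin (n + 1)) ℝ :=
  (matP n)ᵀ * S * matP n

open Finset in
set_option maxHeartbeats 2000000 in
def matPZ (n : ℕ) : Matrix (Fin n) (Fin (n + 1)) ℤ :=
  Matrix.of fun i j => if (j : ℕ) = n then -1 else if (i : ℕ) = (j : ℕ) then 1 else 0

def gpad {n : ℕ} (g : Matrix (Fin n) (Fin n) ℤ) : Matrix (Fin n) (Fin (n+1)) ℤ :=
  Matrix.of fun r i => if h : (i : ℕ) < n then g r ⟨i, h⟩ else 0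

def matM {n : ℕ} (g : Matrix (Fin n) (Fin n) ℤ) : Matrix (Fin (n+1)) (Fin (n+1)) ℤ :=
  (matPZ n)ᵀ * gpad g

lemma matPZ_map (n : ℕ) : (matPZ n).map (Int.cast : ℤ → ℝ) = matP n := by
  ext i j
  simp [matPZ, matP, Matrix.map_apply]

lemma matP_castSucc (n : ℕ) (i j : Fin n) :
    matP n i (Fin.castSucc j) = if i = j then (1:ℝ) else 0 := by
  simp only [matP, of_apply, Fin.coe_castSucc]
  rw [if_neg j.is_lt.ne]
  simp [Fin.val_eq_val]

lemma matP_last (n : ℕ) (i : Fin n) : matP n i (Fin.last n) = -1 := by simp [matP]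

lemma matPZ_castSucc (n : ℕ) (i j : Fin n) :
    matPZ n i (Fin.castSucc j) = if i = j then (1:ℤ) else 0 := by
  simp only [matPZ, of_apply, Fin.coe_castSucc]
  rw [if_neg j.is_lt.ne]
  simp [Fin.val_eq_val]

lemma matPZ_last (n : ℕ) (i : Fin n) : matPZ n i (Fin.last n) = -1 := by simp [matPZ]

lemma matP_rowsum (n : ℕ) (i : Fin n) : ∑ j, matP n i j = 0 := by
  rw [Fin.sum_univ_castSucc]
  simp [matP_castSucc, matP_last]

lemma matPZ_rowsum (n : ℕ) (i : Fin n) : ∑ j, matPZ n i j = 0 := by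
  rw [Fin.sum_univ_castSucc]
  simp [matPZ_castSucc, matPZ_last]

lemma matA_eq (n : ℕ) : matA n = matP n * (matP n)ᵀ := by
  ext i j
  simp only [Matrix.mul_apply, transpose_apply]
  rw [Fin.sum_univ_castSucc]
  simp only [matP_castSucc, matP_last, matA, of_apply]
  rcases eq_or_ne i j with rfl | h
  · simp; norm_num
  · have hz : ∑ k, (if i = k then (1:ℝ) else 0) * (if j = k then 1 else 0) = 0 := by
      apply Finset.sum_eq_zero
      intro k _
      split_ifs with h1 h2
      · exact absurd (h1.trans h2.symm) h
      all_goals ring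
    simp [matA, h, hz]

lemma gpad_lt {n : ℕ} (g : Matrix (Fin n) (Fin n) ℤ) (r : Fin n) {i : Fin (n+1)}
    (h : (i:ℕ) < n) : gpad g r i = g r ⟨i, h⟩ := by simp [gpad, h]

lemma gpad_ge {n : ℕ} (g : Matrix (Fin n) (Fin n) ℤ) (r : Fin n) {i : Fin (n+1)}
    (h : ¬ (i:ℕ) < n) : gpad g r i = 0 := by simp [gpad, h]

lemma gpad_castSucc {n : ℕ} (g : Matrix (Fin n) (Fin n) ℤ) (r k : Fin n) :
    gpad g r (Fin.castSucc k) = g r k := by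
  rw [gpad_lt g r (by simp : ((Fin.castSucc k : Fin (n+1)):ℕ) < n)]
  congr 1

lemma gpad_mul {n : ℕ} (g : Matrix (Fin n) (Fin n) ℤ) :
    gpad g * (matPZ n)ᵀ = g := by
  ext r i
  simp only [Matrix.mul_apply, transpose_apply]
  rw [Fin.sum_univ_castSucc]
  simp only [gpad_castSucc, matPZ_castSucc, gpad_ge g r (by simp [Fin.last] : ¬ ((Fin.last n : Fin (n+1)):ℕ) < n), zero_mul, add_zero]
  simp [mul_ite]

lemma matM_castSucc {n : ℕ} (g : Matrix (Fin n) (Fin n) ℤ) (r : Fin n) (i : Fin (n+1)) :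
    matM g (Fin.castSucc r) i = gpad g r i := by
  simp only [matM, Matrix.mul_apply, transpose_apply, matPZ_castSucc]
  simp [ite_mul]

lemma matM_colsum {n : ℕ} (g : Matrix (Fin n) (Fin n) ℤ) (i : Fin (n+1)) :
    ∑ r, matM g r i = 0 := by
  simp only [matM, Matrix.mul_apply, transpose_apply]
  rw [Finset.sum_comm]
  apply Finset.sum_eq_zero
  intro k _
  rw [← Finset.sum_mul, matPZ_rowsum, zero_mul]

lemma extended_rowsum {n : ℕ} (S : Matrix (Fin n) (Fin n) ℝ) (i : Fin (n+1)) :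
    ∑ j, extended S i j = 0 := by
  simp only [extended, Matrix.mul_apply]
  rw [Finset.sum_comm]
  apply Finset.sum_eq_zero
  intro b _
  rw [← Finset.mul_sum, matP_rowsum, mul_zero]

lemma extended_colsum {n : ℕ} (S : Matrix (Fin n) (Fin n) ℝ) (j : Fin (n+1)) :
    ∑ i, extended S i j = 0 := by
  simp only [extended, Matrix.mul_apply, transpose_apply]
  rw [Finset.sum_comm]
  apply Finset.sum_eq_zero
  intro b _
  rw [← Finset.sum_mul]
  have : ∑ i, ∑ a, matP n a i * S a b = 0 := by
    rw [Finset.sum_comm]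
    apply Finset.sum_eq_zero
    intro a _
    rw [← Finset.sum_mul, matP_rowsum, zero_mul]
  rw [this, zero_mul]

lemma trace_SA {n : ℕ} (S : Matrix (Fin n) (Fin n) ℝ) :
    (S * matA n).trace = (extended S).trace := by
  rw [matA_eq, ← Matrix.mul_assoc, Matrix.trace_mul_comm, extended, Matrix.mul_assoc]

lemma matM_map {n : ℕ} (g : Matrix (Fin n) (Fin n) ℤ) :
    (matM g).map (Int.cast : ℤ → ℝ) = (matP n)ᵀ * ((gpad g).map (Int.cast : ℤ → ℝ)) := by
  have : (matM g).map ((Int.castRingHom ℝ) : ℤ → ℝ)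
      = ((matPZ n)ᵀ * gpad g).map ((Int.castRingHom ℝ) : ℤ → ℝ) := rfl
  rw [Matrix.map_mul] at this
  simpa [Matrix.transpose_map, matPZ_map] using this

lemma gpadR_mul {n : ℕ} (g : Matrix (Fin n) (Fin n) ℤ) :
    ((gpad g).map (Int.cast : ℤ → ℝ)) * (matP n)ᵀ = g.map (Int.cast : ℤ → ℝ) := by
  have : (gpad g * (matPZ n)ᵀ).map ((Int.castRingHom ℝ) : ℤ → ℝ)
      = g.map ((Int.castRingHom ℝ) : ℤ → ℝ) := by rw [gpad_mul]
  rw [Matrix.map_mul] at this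
  simpa [Matrix.transpose_map, matPZ_map] using this

lemma trace_gSA {n : ℕ} (S : Matrix (Fin n) (Fin n) ℝ) (g : Matrix (Fin n) (Fin n) ℤ) :
    ((g.map (Int.cast : ℤ → ℝ)) * S * (g.map (Int.cast : ℤ → ℝ))ᵀ * matA n).trace
    = (((matM g).map (Int.cast : ℤ → ℝ)) * extended S * (((matM g).map (Int.cast : ℤ → ℝ)))ᵀ).trace := by
  set G := g.map (Int.cast : ℤ → ℝ) with hG
  set Q := (gpad g).map (Int.cast : ℤ → ℝ) with hQ
  have h1 : (matM g).map (Int.cast : ℤ → ℝ) = (matP n)ᵀ * Q := matM_map g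
  have hQP : Q * (matP n)ᵀ = G := gpadR_mul g
  have hPQ : matP n * Qᵀ = Gᵀ := by
    rw [← Matrix.transpose_transpose (matP n), ← Matrix.transpose_mul, hQP]
  rw [h1, extended]
  have h2 : (matP n)ᵀ * Q * ((matP n)ᵀ * S * matP n) * ((matP n)ᵀ * Q)ᵀ
      = (matP n)ᵀ * (G * S * Gᵀ) * matP n := by
    rw [Matrix.transpose_mul, Matrix.transpose_transpose]
    simp only [Matrix.mul_assoc]
    rw [← Matrix.mul_assoc Q (matP n)ᵀ, hQP, ← Matrix.mul_assoc (matP n) Qᵀ, hPQ]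
  rw [h2, matA_eq]
  rw [← Matrix.mul_assoc, Matrix.trace_mul_comm, ← Matrix.mul_assoc]

lemma trace_expand {m : ℕ} (B N : Matrix (Fin m) (Fin m) ℝ)
    (hrow : ∀ i, ∑ j, B i j = 0) (hcol : ∀ j, ∑ i, B i j = 0) :
    (N * B * Nᵀ).trace * (-2) = ∑ i, ∑ j, B i j * ∑ r, (N r i - N r j)^2 := by
  have key : ∀ r, ∑ i, ∑ j, B i j * (N r i - N r j)^2
      = -2 * ∑ i, ∑ j, N r i * B i j * N r j := by
    intro r
    have e1 : ∀ i j, B i j * (N r i - N r j)^2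
        = B i j * N r i^2 + B i j * N r j^2 - 2 * (N r i * B i j * N r j) := by
      intros; ring
    simp only [e1, Finset.sum_sub_distrib, Finset.sum_add_distrib]
    have t1 : ∑ i, ∑ j, B i j * N r i ^ 2 = 0 := by
      apply Finset.sum_eq_zero
      intro i _
      rw [← Finset.sum_mul, hrow, zero_mul]
    have t2 : ∑ i : Fin m, ∑ j, B i j * N r j ^ 2 = 0 := by
      rw [Finset.sum_comm]
      apply Finset.sum_eq_zero
      intro j _
      rw [← Finset.sum_mul, hcol, zero_mul]
    rw [t1, t2, zero_add, zero_sub]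
    rw [Finset.mul_sum]
    rw [← Finset.sum_neg_distrib]
    apply Finset.sum_congr rfl
    intro i _
    rw [Finset.mul_sum, ← Finset.sum_neg_distrib]
    apply Finset.sum_congr rfl
    intro j _
    ring
  have tr : (N * B * Nᵀ).trace = ∑ r, ∑ i, ∑ j, N r i * B i j * N r j := by
    simp only [Matrix.trace, Matrix.diag, Matrix.mul_apply, transpose_apply, Finset.sum_mul]
    apply Finset.sum_congr rfl
    intro r _
    rw [Finset.sum_comm]
  have hms : ∀ i j, B i j * ∑ r, (N r i - N r j)^2 = ∑ r, B i j * (N r i - N r j)^2 :=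
    fun i j => Finset.mul_sum _ _ _
  simp only [hms]
  have swap : (∑ i, ∑ j, ∑ r, B i j * (N r i - N r j)^2)
      = ∑ r, ∑ i, ∑ j, B i j * (N r i - N r j)^2 := by
    rw [show (∑ i, ∑ j, ∑ r, B i j * (N r i - N r j)^2)
        = ∑ i, ∑ r, ∑ j, B i j * (N r i - N r j)^2 from
      Finset.sum_congr rfl fun i _ => Finset.sum_comm, Finset.sum_comm]
  rw [swap, tr, Finset.sum_mul]
  apply Finset.sum_congr rfl
  intro r _
  rw [key r]
  ring

lemma int_sum_sq {m : ℕ} (z : Fin m → ℤ) (hsum : ∑ r, z r = 0) (hne : ∃ r, z r ≠ 0) :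
    2 ≤ ∑ r, z r ^ 2 := by
  obtain ⟨r, hr⟩ := hne
  have hs : ∃ s, s ≠ r ∧ z s ≠ 0 := by
    by_contra h
    push_neg at h
    have h2 : ∑ x, z x = z r := Finset.sum_eq_single r (fun b _ hb => h b hb) (by simp)
    exact hr (h2.symm.trans hsum)
  obtain ⟨s, hsr, hs⟩ := hs
  have h1 : 1 ≤ z r ^ 2 := by rcases lt_or_gt_of_ne hr with h|h <;> nlinarith
  have h2 : 1 ≤ z s ^ 2 := by rcases lt_or_gt_of_ne hs with h|h <;> nlinarith
  have h3 : z r ^ 2 + z s ^ 2 ≤ ∑ x, z x ^ 2 := by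
    have h4 := Finset.sum_le_sum_of_subset_of_nonneg
      (Finset.subset_univ ({r, s} : Finset (Fin m)))
      (fun i _ _ => sq_nonneg (z i))
    rwa [Finset.sum_pair (Ne.symm hsr)] at h4
  linarith

lemma matM_cols_ne {n : ℕ} (g : Matrix (Fin n) (Fin n) ℤ) (hg : IsUnit g.det)
    {i j : Fin (n+1)} (hij : i ≠ j) : ∃ r, matM g r i ≠ matM g r j := by
  by_contra h
  push_neg at h
  have hgp : ∀ r : Fin n, gpad g r i = gpad g r j := fun r => by
    rw [← matM_castSucc, ← matM_castSucc, h]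
  have hdet : g.det = 0 := by
    rcases Nat.lt_or_ge (i:ℕ) n with hi | hi
    · rcases Nat.lt_or_ge (j:ℕ) n with hj | hj
      · apply Matrix.det_zero_of_column_eq (i := (⟨i, hi⟩ : Fin n)) (j := ⟨j, hj⟩)
        · intro he
          rw [Fin.mk.injEq] at he
          exact hij (Fin.ext he)
        · intro k
          have hk := hgp k
          rwa [gpad_lt g k hi, gpad_lt g k hj] at hk
      · apply Matrix.det_eq_zero_of_column_eq_zero (⟨i, hi⟩ : Fin n)
        intro k
        have hk := hgp k
        rwa [gpad_lt g k hi, gpad_ge g k (not_lt.mpr hj)] at hk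
    · rcases Nat.lt_or_ge (j:ℕ) n with hj | hj
      · apply Matrix.det_eq_zero_of_column_eq_zero (⟨j, hj⟩ : Fin n)
        intro k
        have hk := (hgp k).symm
        rwa [gpad_lt g k hj, gpad_ge g k (not_lt.mpr hi)] at hk
      · exfalso
        apply hij
        apply Fin.ext
        have hi' : (i:ℕ) = n := le_antisymm (Nat.lt_succ_iff.mp i.is_lt) hi
        have hj' : (j:ℕ) = n := le_antisymm (Nat.lt_succ_iff.mp j.is_lt) hj
        rw [hi', hj']
  rw [hdet] at hg
  simp at hg

lemma one_diff_sq {m : ℕ} {i j : Fin m} (hij : i ≠ j) :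
    ∑ r, ((1 : Matrix (Fin m) (Fin m) ℝ) r i - (1 : Matrix (Fin m) (Fin m) ℝ) r j)^2 = 2 := by
  have hterm : ∀ r : Fin m, ((1 : Matrix (Fin m) (Fin m) ℝ) r i - (1 : Matrix (Fin m) (Fin m) ℝ) r j)^2
      = (if r = i then (1:ℝ) else 0) + (if r = j then 1 else 0) := by
    intro r
    simp only [Matrix.one_apply]
    rcases eq_or_ne r i with rfl|h1 <;> rcases eq_or_ne r j with rfl|h2
    · exact absurd rfl hij
    · norm_num [h2]
    · norm_num [h1]
    · norm_num [h1, h2]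
  simp only [hterm, Finset.sum_add_distrib]
  simp
  norm_num

lemma backward_dir {n : ℕ} (S : Matrix (Fin n) (Fin n) ℝ)
    (hoff : ∀ i j : Fin (n+1), i ≠ j → extended S i j ≤ 0)
    (g : Matrix (Fin n) (Fin n) ℤ) (hg : IsUnit g.det) :
    (S * matA n).trace ≤
      ((g.map (Int.cast : ℤ → ℝ)) * S * (g.map (Int.cast : ℤ → ℝ))ᵀ * matA n).trace := by
  rw [trace_SA, trace_gSA]
  set B := extended S with hB
  set N := (matM g).map (Int.cast : ℤ → ℝ) with hN
  have hrow := extended_rowsum S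
  have hcol := extended_colsum S
  have e1 := trace_expand B N hrow hcol
  have e0 := trace_expand B 1 hrow hcol
  have h0 : ((1 : Matrix (Fin (n+1)) (Fin (n+1)) ℝ) * B * (1 : Matrix (Fin (n+1)) (Fin (n+1)) ℝ)ᵀ) = B := by
    simp
  rw [h0] at e0
  have hle : ∑ i, ∑ j, B i j * ∑ r, (N r i - N r j)^2
      ≤ ∑ i, ∑ j, B i j * ∑ r, ((1 : Matrix (Fin (n+1)) (Fin (n+1)) ℝ) r i - (1 : Matrix (Fin (n+1)) (Fin (n+1)) ℝ) r j)^2 := by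
    apply Finset.sum_le_sum
    intro i _
    apply Finset.sum_le_sum
    intro j _
    rcases eq_or_ne i j with rfl | hij
    · simp
    · have hBij := hoff i j hij
      have hDZ : (2:ℤ) ≤ ∑ r, (matM g r i - matM g r j)^2 := by
        apply int_sum_sq
        · rw [Finset.sum_sub_distrib, matM_colsum, matM_colsum, sub_zero]
        · obtain ⟨r, hr⟩ := matM_cols_ne g hg hij
          exact ⟨r, sub_ne_zero_of_ne hr⟩
      have hD2 : (2:ℝ) ≤ ∑ r, (N r i - N r j)^2 := by
        have hcast : (∑ r, (N r i - N r j)^2)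
            = ((∑ r, (matM g r i - matM g r j)^2 : ℤ) : ℝ) := by
          push_cast
          apply Finset.sum_congr rfl
          intro r _
          simp [hN, Matrix.map_apply]
        rw [hcast]
        exact_mod_cast hDZ
      rw [one_diff_sq hij]
      nlinarith
  linarith

set_option maxHeartbeats 4000000 in
/-- For `n ≤ 3`, a positive definite symmetric `S` is Selling-reduced
(Venkov-reduced with respect to `A_n`, i.e. `Trace(S A_n) ≤ Trace(gSgᵀ A_n)`
for all `g ∈ GL_n(ℤ)`) if and only if all off-diagonal entries of the
extended matrix `S̃` are non-positive. -/
theorem selling_reduced_iff_offdiag_nonpos (n : ℕ) (hn : n ≤ 3)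
    (S : Matrix (Fin n) (Fin n) ℝ) (hS : S.PosDef) :
    (∀ g : Matrix (Fin n) (Fin n) ℤ, IsUnit g.det →
      (S * matA n).trace ≤
        ((g.map (Int.cast : ℤ → ℝ)) * S * (g.map (Int.cast : ℤ → ℝ))ᵀ * matA n).trace) ↔
    (∀ i j : Fin (n + 1), i ≠ j → extended S i j ≤ 0) := by
  constructor
  · intro H i j hij
    have hsym : ∀ a b, S a b = S b a := fun a b => by
      have h := hS.1.apply a b
      simpa using h.symm
    by_contra hc
    push_neg at hc
    interval_cases n
    · exact absurd (Fin.ext (by omega)) hij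
    · have h00 : 0 < S 0 0 := by
        have h1 := hS.dotProduct_mulVec_pos (x := fun _ => 1) (by
          intro h
          exact one_ne_zero (congrFun h 0))
        simpa [dotProduct, Matrix.mulVec, Fin.sum_univ_one] using h1
      fin_cases i <;> fin_cases j
      · exact hij rfl
      · simp (config := { decide := true }) only [extended, matP, Matrix.mul_apply,
          Matrix.transpose_apply, Matrix.of_apply, Fin.sum_univ_succ, Fin.sum_univ_zero] at hc
        norm_num at hc
        linarith [h00]
      · simp (config := { decide := true }) only [extended, matP, Matrix.mul_apply,
          Matrix.transpose_apply, Matrix.of_apply, Fin.sum_univ_succ, Fin.sum_univ_zero] at hc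
        norm_num at hc
        linarith [h00]
      · exact hij rfl
    · fin_cases i <;> fin_cases j
      · exact hij rfl
      · have key := H !![-1,0;0,1]
          (by rw [Matrix.det_fin_two_of]; exact Int.isUnit_iff.mpr (by norm_num))
        simp (config := { decide := true }) only [extended, matA, matP, Matrix.trace,
          Matrix.diag, Matrix.mul_apply, Matrix.transpose_apply, Matrix.map_apply,
          Matrix.of_apply, Fin.sum_univ_succ, Fin.sum_univ_zero, Fin.isValue] at key hc
        norm_num [Matrix.cons_val_zero, Matrix.cons_val_one, Matrix.head_cons,
          Matrix.vecHead, Matrix.vecTail, Function.comp, Fin.ext_iff] at key hc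
        linarith [hsym 0 1]
      · have key := H !![-1,0;-1,-1]
          (by rw [Matrix.det_fin_two_of]; exact Int.isUnit_iff.mpr (by norm_num))
        simp (config := { decide := true }) only [extended, matA, matP, Matrix.trace,
          Matrix.diag, Matrix.mul_apply, Matrix.transpose_apply, Matrix.map_apply,
          Matrix.of_apply, Fin.sum_univ_succ, Fin.sum_univ_zero, Fin.isValue] at key hc
        norm_num [Matrix.cons_val_zero, Matrix.cons_val_one, Matrix.head_cons,
          Matrix.vecHead, Matrix.vecTail, Function.comp, Fin.ext_iff] at key hc
        linarith [hsym 0 1]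
      · have key := H !![-1,0;0,1]
          (by rw [Matrix.det_fin_two_of]; exact Int.isUnit_iff.mpr (by norm_num))
        simp (config := { decide := true }) only [extended, matA, matP, Matrix.trace,
          Matrix.diag, Matrix.mul_apply, Matrix.transpose_apply, Matrix.map_apply,
          Matrix.of_apply, Fin.sum_univ_succ, Fin.sum_univ_zero, Fin.isValue] at key hc
        norm_num [Matrix.cons_val_zero, Matrix.cons_val_one, Matrix.head_cons,
          Matrix.vecHead, Matrix.vecTail, Function.comp, Fin.ext_iff] at key hc
        linarith [hsym 0 1]
      · exact hij rfl
      · have key := H !![0,-1;-1,-1]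
          (by rw [Matrix.det_fin_two_of]; exact Int.isUnit_iff.mpr (by norm_num))
        simp (config := { decide := true }) only [extended, matA, matP, Matrix.trace,
          Matrix.diag, Matrix.mul_apply, Matrix.transpose_apply, Matrix.map_apply,
          Matrix.of_apply, Fin.sum_univ_succ, Fin.sum_univ_zero, Fin.isValue] at key hc
        norm_num [Matrix.cons_val_zero, Matrix.cons_val_one, Matrix.head_cons,
          Matrix.vecHead, Matrix.vecTail, Function.comp, Fin.ext_iff] at key hc
        linarith [hsym 0 1]
      · have key := H !![-1,0;-1,-1]
          (by rw [Matrix.det_fin_two_of]; exact Int.isUnit_iff.mpr (by norm_num))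
        simp (config := { decide := true }) only [extended, matA, matP, Matrix.trace,
          Matrix.diag, Matrix.mul_apply, Matrix.transpose_apply, Matrix.map_apply,
          Matrix.of_apply, Fin.sum_univ_succ, Fin.sum_univ_zero, Fin.isValue] at key hc
        norm_num [Matrix.cons_val_zero, Matrix.cons_val_one, Matrix.head_cons,
          Matrix.vecHead, Matrix.vecTail, Function.comp, Fin.ext_iff] at key hc
        linarith [hsym 0 1]
      · have key := H !![0,-1;-1,-1]
          (by rw [Matrix.det_fin_two_of]; exact Int.isUnit_iff.mpr (by norm_num))
        simp (config := { decide := true }) only [extended, matA, matP, Matrix.trace,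
          Matrix.diag, Matrix.mul_apply, Matrix.transpose_apply, Matrix.map_apply,
          Matrix.of_apply, Fin.sum_univ_succ, Fin.sum_univ_zero, Fin.isValue] at key hc
        norm_num [Matrix.cons_val_zero, Matrix.cons_val_one, Matrix.head_cons,
          Matrix.vecHead, Matrix.vecTail, Function.comp, Fin.ext_iff] at key hc
        linarith [hsym 0 1]
      · exact hij rfl
    · fin_cases i <;> fin_cases j
      · exact hij rfl
      · have key := H !![-1,0,0;0,1,0;1,0,1]
          (Int.isUnit_iff.mpr (by norm_num [Matrix.det_fin_three, Matrix.vecHead, Matrix.vecTail, Matrix.cons_val_two]))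
        simp (config := { decide := true }) only [extended, matA, matP, Matrix.trace,
          Matrix.diag, Matrix.mul_apply, Matrix.transpose_apply, Matrix.map_apply,
          Matrix.of_apply, Fin.sum_univ_succ, Fin.sum_univ_zero, Fin.isValue] at key hc
        norm_num [Matrix.cons_val_zero, Matrix.cons_val_one, Matrix.head_cons,
          Matrix.vecHead, Matrix.vecTail, Function.comp, Fin.ext_iff, Matrix.cons_val_two] at key hc
        linarith [hsym 0 1, hsym 0 2, hsym 1 2]
      · have key := H !![-1,0,0;1,1,0;0,0,1]
          (Int.isUnit_iff.mpr (by norm_num [Matrix.det_fin_three, Matrix.vecHead, Matrix.vecTail, Matrix.cons_val_two]))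
        simp (config := { decide := true }) only [extended, matA, matP, Matrix.trace,
          Matrix.diag, Matrix.mul_apply, Matrix.transpose_apply, Matrix.map_apply,
          Matrix.of_apply, Fin.sum_univ_succ, Fin.sum_univ_zero, Fin.isValue] at key hc
        norm_num [Matrix.cons_val_zero, Matrix.cons_val_one, Matrix.head_cons,
          Matrix.vecHead, Matrix.vecTail, Function.comp, Fin.ext_iff, Matrix.cons_val_two] at key hc
        linarith [hsym 0 1, hsym 0 2, hsym 1 2]
      · have key := H !![-1,0,0;1,1,0;1,0,1]
          (Int.isUnit_iff.mpr (by norm_num [Matrix.det_fin_three, Matrix.vecHead, Matrix.vecTail, Matrix.cons_val_two]))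
        simp (config := { decide := true }) only [extended, matA, matP, Matrix.trace,
          Matrix.diag, Matrix.mul_apply, Matrix.transpose_apply, Matrix.map_apply,
          Matrix.of_apply, Fin.sum_univ_succ, Fin.sum_univ_zero, Fin.isValue] at key hc
        norm_num [Matrix.cons_val_zero, Matrix.cons_val_one, Matrix.head_cons,
          Matrix.vecHead, Matrix.vecTail, Function.comp, Fin.ext_iff, Matrix.cons_val_two] at key hc
        linarith [hsym 0 1, hsym 0 2, hsym 1 2]
      · have key := H !![-1,0,0;0,1,0;1,0,1]
          (Int.isUnit_iff.mpr (by norm_num [Matrix.det_fin_three, Matrix.vecHead, Matrix.vecTail, Matrix.cons_val_two]))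
        simp (config := { decide := true }) only [extended, matA, matP, Matrix.trace,
          Matrix.diag, Matrix.mul_apply, Matrix.transpose_apply, Matrix.map_apply,
          Matrix.of_apply, Fin.sum_univ_succ, Fin.sum_univ_zero, Fin.isValue] at key hc
        norm_num [Matrix.cons_val_zero, Matrix.cons_val_one, Matrix.head_cons,
          Matrix.vecHead, Matrix.vecTail, Function.comp, Fin.ext_iff, Matrix.cons_val_two] at key hc
        linarith [hsym 0 1, hsym 0 2, hsym 1 2]
      · exact hij rfl
      · have key := H !![1,1,0;0,-1,0;0,0,1]
          (Int.isUnit_iff.mpr (by norm_num [Matrix.det_fin_three, Matrix.vecHead, Matrix.vecTail, Matrix.cons_val_two]))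
        simp (config := { decide := true }) only [extended, matA, matP, Matrix.trace,
          Matrix.diag, Matrix.mul_apply, Matrix.transpose_apply, Matrix.map_apply,
          Matrix.of_apply, Fin.sum_univ_succ, Fin.sum_univ_zero, Fin.isValue] at key hc
        norm_num [Matrix.cons_val_zero, Matrix.cons_val_one, Matrix.head_cons,
          Matrix.vecHead, Matrix.vecTail, Function.comp, Fin.ext_iff, Matrix.cons_val_two] at key hc
        linarith [hsym 0 1, hsym 0 2, hsym 1 2]
      · have key := H !![1,1,0;0,-1,0;0,1,1]
          (Int.isUnit_iff.mpr (by norm_num [Matrix.det_fin_three, Matrix.vecHead, Matrix.vecTail, Matrix.cons_val_two]))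
        simp (config := { decide := true }) only [extended, matA, matP, Matrix.trace,
          Matrix.diag, Matrix.mul_apply, Matrix.transpose_apply, Matrix.map_apply,
          Matrix.of_apply, Fin.sum_univ_succ, Fin.sum_univ_zero, Fin.isValue] at key hc
        norm_num [Matrix.cons_val_zero, Matrix.cons_val_one, Matrix.head_cons,
          Matrix.vecHead, Matrix.vecTail, Function.comp, Fin.ext_iff, Matrix.cons_val_two] at key hc
        linarith [hsym 0 1, hsym 0 2, hsym 1 2]
      · have key := H !![-1,0,0;1,1,0;0,0,1]
          (Int.isUnit_iff.mpr (by norm_num [Matrix.det_fin_three, Matrix.vecHead, Matrix.vecTail, Matrix.cons_val_two]))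
        simp (config := { decide := true }) only [extended, matA, matP, Matrix.trace,
          Matrix.diag, Matrix.mul_apply, Matrix.transpose_apply, Matrix.map_apply,
          Matrix.of_apply, Fin.sum_univ_succ, Fin.sum_univ_zero, Fin.isValue] at key hc
        norm_num [Matrix.cons_val_zero, Matrix.cons_val_one, Matrix.head_cons,
          Matrix.vecHead, Matrix.vecTail, Function.comp, Fin.ext_iff, Matrix.cons_val_two] at key hc
        linarith [hsym 0 1, hsym 0 2, hsym 1 2]
      · have key := H !![1,1,0;0,-1,0;0,0,1]
          (Int.isUnit_iff.mpr (by norm_num [Matrix.det_fin_three, Matrix.vecHead, Matrix.vecTail, Matrix.cons_val_two]))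
        simp (config := { decide := true }) only [extended, matA, matP, Matrix.trace,
          Matrix.diag, Matrix.mul_apply, Matrix.transpose_apply, Matrix.map_apply,
          Matrix.of_apply, Fin.sum_univ_succ, Fin.sum_univ_zero, Fin.isValue] at key hc
        norm_num [Matrix.cons_val_zero, Matrix.cons_val_one, Matrix.head_cons,
          Matrix.vecHead, Matrix.vecTail, Function.comp, Fin.ext_iff, Matrix.cons_val_two] at key hc
        linarith [hsym 0 1, hsym 0 2, hsym 1 2]
      · exact hij rfl
      · have key := H !![1,0,1;0,1,1;0,0,-1]
          (Int.isUnit_iff.mpr (by norm_num [Matrix.det_fin_three, Matrix.vecHead, Matrix.vecTail, Matrix.cons_val_two]))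
        simp (config := { decide := true }) only [extended, matA, matP, Matrix.trace,
          Matrix.diag, Matrix.mul_apply, Matrix.transpose_apply, Matrix.map_apply,
          Matrix.of_apply, Fin.sum_univ_succ, Fin.sum_univ_zero, Fin.isValue] at key hc
        norm_num [Matrix.cons_val_zero, Matrix.cons_val_one, Matrix.head_cons,
          Matrix.vecHead, Matrix.vecTail, Function.comp, Fin.ext_iff, Matrix.cons_val_two] at key hc
        linarith [hsym 0 1, hsym 0 2, hsym 1 2]
      · have key := H !![-1,0,0;1,1,0;1,0,1]
          (Int.isUnit_iff.mpr (by norm_num [Matrix.det_fin_three, Matrix.vecHead, Matrix.vecTail, Matrix.cons_val_two]))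
        simp (config := { decide := true }) only [extended, matA, matP, Matrix.trace,
          Matrix.diag, Matrix.mul_apply, Matrix.transpose_apply, Matrix.map_apply,
          Matrix.of_apply, Fin.sum_univ_succ, Fin.sum_univ_zero, Fin.isValue] at key hc
        norm_num [Matrix.cons_val_zero, Matrix.cons_val_one, Matrix.head_cons,
          Matrix.vecHead, Matrix.vecTail, Function.comp, Fin.ext_iff, Matrix.cons_val_two] at key hc
        linarith [hsym 0 1, hsym 0 2, hsym 1 2]
      · have key := H !![1,1,0;0,-1,0;0,1,1]
          (Int.isUnit_iff.mpr (by norm_num [Matrix.det_fin_three, Matrix.vecHead, Matrix.vecTail, Matrix.cons_val_two]))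
        simp (config := { decide := true }) only [extended, matA, matP, Matrix.trace,
          Matrix.diag, Matrix.mul_apply, Matrix.transpose_apply, Matrix.map_apply,
          Matrix.of_apply, Fin.sum_univ_succ, Fin.sum_univ_zero, Fin.isValue] at key hc
        norm_num [Matrix.cons_val_zero, Matrix.cons_val_one, Matrix.head_cons,
          Matrix.vecHead, Matrix.vecTail, Function.comp, Fin.ext_iff, Matrix.cons_val_two] at key hc
        linarith [hsym 0 1, hsym 0 2, hsym 1 2]
      · have key := H !![1,0,1;0,1,1;0,0,-1]
          (Int.isUnit_iff.mpr (by norm_num [Matrix.det_fin_three, Matrix.vecHead, Matrix.vecTail, Matrix.cons_val_two]))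
        simp (config := { decide := true }) only [extended, matA, matP, Matrix.trace,
          Matrix.diag, Matrix.mul_apply, Matrix.transpose_apply, Matrix.map_apply,
          Matrix.of_apply, Fin.sum_univ_succ, Fin.sum_univ_zero, Fin.isValue] at key hc
        norm_num [Matrix.cons_val_zero, Matrix.cons_val_one, Matrix.head_cons,
          Matrix.vecHead, Matrix.vecTail, Function.comp, Fin.ext_iff, Matrix.cons_val_two] at key hc
        linarith [hsym 0 1, hsym 0 2, hsym 1 2]
      · exact hij rfl
  · intro hoff g hg
    exact backward_dir S hoff g hg
end

section
/- The Gauss reduction algorithm terminates: given any positive definite 2×2 symmetric matrix S, iterating the transformation S ↦ gSgᵀ with g = [[0,1],[1,m]], where m is the integer nearest to −s₁₂/s₂₂, reaches after finitely many steps a matrix with s₁₁ ≤ s₂₂, and after a possible sign change of the first basis vector satisfies 0 ≤ −2s₁₂ ≤ s₁₁ ≤ s₂₂. -/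
open Matrix

/-- One step of the Gauss reduction algorithm: `S ↦ g S gᵀ` with
`g = [[0,1],[1,m]]`, where `m` is the integer nearest to `−s₁₂/s₂₂`. -/
noncomputable def gaussStep (S : Matrix (Fin 2) (Fin 2) ℝ) :
    Matrix (Fin 2) (Fin 2) ℝ :=
  let m : ℤ := round (-(S 0 1) / S 1 1)
  !![(0 : ℝ), 1; 1, (m : ℝ)] * S * (!![(0 : ℝ), 1; 1, (m : ℝ)])ᵀ


lemma conjcalc (a b b' c m : ℝ) :
    !![(0:ℝ),1;1,m] * !![a,b;b',c] * (!![(0:ℝ),1;1,m])ᵀ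
      = !![c, b' + m*c; b + m*c, a + m*b + m*b' + m^2*c] := by
  have ht : (!![(0:ℝ),1;1,m])ᵀ = !![(0:ℝ),1;1,m] := by
    rw [Matrix.eta_fin_two (!![(0:ℝ),1;1,m])ᵀ]; simp
  rw [ht, Matrix.mul_fin_two, Matrix.mul_fin_two]
  congr 1 <;> ring_nf

lemma gaussStep_eq (S : Matrix (Fin 2) (Fin 2) ℝ) :
    gaussStep S = !![S 1 1, S 1 0 + (round (-(S 0 1) / S 1 1) : ℝ) * S 1 1;
      S 0 1 + (round (-(S 0 1) / S 1 1) : ℝ) * S 1 1,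
      S 0 0 + (round (-(S 0 1) / S 1 1) : ℝ) * S 0 1
        + (round (-(S 0 1) / S 1 1) : ℝ) * S 1 0
        + (round (-(S 0 1) / S 1 1) : ℝ)^2 * S 1 1] := by
  show !![(0 : ℝ), 1; 1, _] * S * _ = _
  rw [Matrix.eta_fin_two S, conjcalc]
  norm_num

/-- round bound -/
lemma round_bound (b c : ℝ) (hc : 0 < c) :
    |b + (round (-b / c) : ℝ) * c| ≤ c / 2 := by
  have h := abs_sub_round (-b / c)
  have hne : c ≠ 0 := ne_of_gt hc
  have : |(-b / c) - (round (-b / c) : ℝ)| * c ≤ (1/2) * c :=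
    mul_le_mul_of_nonneg_right h (le_of_lt hc)
  have heq : |(-b / c) - (round (-b / c) : ℝ)| * c = |b + (round (-b / c) : ℝ) * c| := by
    rw [show |(-b / c) - (round (-b / c) : ℝ)| * c
          = |((-b / c) - (round (-b / c) : ℝ)) * c| by rw [abs_mul, abs_of_pos hc],
      show ((-b / c) - (round (-b / c) : ℝ)) * c = -(b + (round (-b / c) : ℝ) * c) by
        field_simp; ring, abs_neg]
  rw [heq] at this
  linarith

/-- Invariant: symmetry, positive (1,1)-entry, fixed determinant. -/
def GInv (D : ℝ) (S : Matrix (Fin 2) (Fin 2) ℝ) : Prop :=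
  S 1 0 = S 0 1 ∧ 0 < S 1 1 ∧ S 0 0 * S 1 1 - S 0 1 ^ 2 = D

lemma ginv_step {D : ℝ} (hD : 0 < D) {S : Matrix (Fin 2) (Fin 2) ℝ} (h : GInv D S) :
    GInv D (gaussStep S) ∧ |2 * (gaussStep S) 0 1| ≤ gaussStep S 0 0 ∧
      gaussStep S 0 0 = S 1 1 ∧
      gaussStep S 1 1 = S 0 0 + 2*((round (-(S 0 1) / S 1 1) : ℤ):ℝ) * S 0 1
        + ((round (-(S 0 1) / S 1 1) : ℤ):ℝ)^2 * S 1 1 := by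
  obtain ⟨hsym, hc, hdet⟩ := h
  set m : ℤ := round (-(S 0 1) / S 1 1) with hm
  set a := S 0 0; set b := S 0 1; set c := S 1 1
  have hrb := round_bound b c hc
  rw [← hm] at hrb
  have hent := gaussStep_eq S
  rw [hsym] at hent
  have e00 : gaussStep S 0 0 = c := by rw [hent]; norm_num; rfl
  have e01 : gaussStep S 0 1 = b + (m:ℝ)*c := by rw [hent]; norm_num; rfl
  have e10 : gaussStep S 1 0 = b + (m:ℝ)*c := by rw [hent]; norm_num; rfl
  have e11 : gaussStep S 1 1 = a + 2*(m:ℝ)*b + (m:ℝ)^2*c := by rw [hent]; norm_num; ring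
  have habs : |2 * (gaussStep S) 0 1| ≤ gaussStep S 0 0 := by
    rw [e01, e00, abs_mul]
    norm_num
    linarith
  have hpos : 0 < gaussStep S 1 1 := by
    rw [e11]
    have : c * (a + 2*(m:ℝ)*b + (m:ℝ)^2*c) = D + (b + (m:ℝ)*c)^2 := by
      rw [← hdet]; ring
    nlinarith [sq_nonneg (b + (m:ℝ)*c)]
  refine ⟨⟨by rw [e01, e10], hpos, ?_⟩, habs, e00, by rw [e11]⟩
  rw [e00, e01, e11, ← hdet]; ring

lemma key_arith (a b c : ℝ) (m : ℤ) (hc : 0 < c) (hb : |2*b| ≤ a) (h1 : c < a)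
    (h2 : a + 2*(m:ℝ)*b + (m:ℝ)^2*c < c) : 3*c < a := by
  rcases eq_or_ne m 0 with h0 | h0
  · subst h0; norm_num at h2; linarith
  have hcast : |(m:ℝ)| = ((|m| : ℤ) : ℝ) := by push_cast; ring
  have h1' : (1:ℝ) ≤ |(m:ℝ)| := by
    rw [hcast]; exact_mod_cast Int.one_le_abs h0
  have hmb : -(|(m:ℝ)| * a) ≤ 2*(m:ℝ)*b := by
    have he : |2*(m:ℝ)*b| = |(m:ℝ)| * |2*b| := by rw [show 2*(m:ℝ)*b = (m:ℝ)*(2*b) by ring, abs_mul]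
    have h3 : |(m:ℝ)| * |2*b| ≤ |(m:ℝ)| * a :=
      mul_le_mul_of_nonneg_left hb (abs_nonneg _)
    have h4 := neg_abs_le (2*(m:ℝ)*b)
    rw [he] at h4; linarith
  have hm2 : (m:ℝ)^2 = |(m:ℝ)|^2 := (sq_abs _).symm
  rcases eq_or_lt_of_le h1' with heq | hlt
  · rw [← heq] at hmb
    rw [hm2, ← heq] at h2
    norm_num at h2
    linarith
  · have h2' : (2:ℝ) ≤ |(m:ℝ)| := by
      rw [hcast] at hlt ⊢
      have : 1 < |m| := by exact_mod_cast hlt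
      exact_mod_cast this
    set M := |(m:ℝ)| with hM
    rw [hm2] at h2
    by_contra hcon
    push_neg at hcon
    nlinarith [mul_nonneg (by linarith : (0:ℝ) ≤ M - 2) (by linarith : (0:ℝ) ≤ M - 1),
      mul_pos (by linarith : (0:ℝ) < M - 1) hc]


lemma diagcalc (a b b' c e : ℝ) :
    !![e,0;0,(1:ℝ)] * !![a,b;b',c] * !![e,0;0,(1:ℝ)]
      = !![e^2*a, e*b; e*b', c] := by
  rw [Matrix.mul_fin_two, Matrix.mul_fin_two]
  congr 1 <;> ring_nf

lemma final (M : Matrix (Fin 2) (Fin 2) ℝ) (hsym : M 1 0 = M 0 1)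
    (hb : |2 * M 0 1| ≤ M 0 0) (hk : M 0 0 ≤ M 1 1) (e : ℝ)
    (he : e = 1 ∧ M 0 1 ≤ 0 ∨ e = -1 ∧ 0 < M 0 1) :
    0 ≤ -(2 * (!![e,0;0,(1:ℝ)] * M * !![e,0;0,(1:ℝ)]) 0 1) ∧
    -(2 * (!![e,0;0,(1:ℝ)] * M * !![e,0;0,(1:ℝ)]) 0 1)
      ≤ (!![e,0;0,(1:ℝ)] * M * !![e,0;0,(1:ℝ)]) 0 0 ∧
    (!![e,0;0,(1:ℝ)] * M * !![e,0;0,(1:ℝ)]) 0 0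
      ≤ (!![e,0;0,(1:ℝ)] * M * !![e,0;0,(1:ℝ)]) 1 1 := by
  have hcalc : !![e,0;0,(1:ℝ)] * M * !![e,0;0,(1:ℝ)]
      = !![e^2 * M 0 0, e * M 0 1; e * M 1 0, M 1 1] := by
    rw [Matrix.eta_fin_two M, diagcalc]
    norm_num
  rw [hcalc]
  have he2 : e^2 = 1 := by rcases he with ⟨h,_⟩|⟨h,_⟩ <;> rw [h] <;> norm_num
  have e01 : (!![e^2 * M 0 0, e * M 0 1; e * M 1 0, M 1 1]) 0 1 = e * M 0 1 := by norm_num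
  have e00 : (!![e^2 * M 0 0, e * M 0 1; e * M 1 0, M 1 1]) 0 0 = e^2 * M 0 0 := by norm_num
  have e11 : (!![e^2 * M 0 0, e * M 0 1; e * M 1 0, M 1 1]) 1 1 = M 1 1 := by norm_num
  rw [e01, e00, e11, he2, one_mul]
  have habs : -(2 * (e * M 0 1)) ≤ M 0 0 := by
    have h1 : -(2 * (e * M 0 1)) ≤ |2 * (e * M 0 1)| := neg_le_abs _
    have h2 : |2 * (e * M 0 1)| = |e| * |2 * M 0 1| := by
      rw [show 2 * (e * M 0 1) = e * (2 * M 0 1) by ring, abs_mul]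
    have h3 : |e| = 1 := by rcases he with ⟨h,_⟩|⟨h,_⟩ <;> rw [h] <;> norm_num
    rw [h2, h3, one_mul] at h1
    linarith
  refine ⟨?_, habs, hk⟩
  rcases he with ⟨h,h'⟩|⟨h,h'⟩ <;> rw [h] <;> nlinarith

/-- The Gauss reduction algorithm terminates: for any positive definite
2×2 symmetric matrix `S`, after finitely many Gauss steps one reaches a
matrix with `s₁₁ ≤ s₂₂` which, after a possible sign change of the first
basis vector, satisfies `0 ≤ −2s₁₂ ≤ s₁₁ ≤ s₂₂`. -/
theorem gauss_algorithm_terminates (S : Matrix (Fin 2) (Fin 2) ℝ)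
    (hS : S.PosDef) :
    ∃ (k : ℕ) (ε : ℝ), (ε = 1 ∨ ε = -1) ∧
      (gaussStep^[k] S) 0 0 ≤ (gaussStep^[k] S) 1 1 ∧
      (let T' := !![ε, 0; 0, (1 : ℝ)] * (gaussStep^[k] S) * !![ε, 0; 0, (1 : ℝ)];
        0 ≤ -(2 * T' 0 1) ∧ -(2 * T' 0 1) ≤ T' 0 0 ∧ T' 0 0 ≤ T' 1 1) := by
  have hsym0 : S 1 0 = S 0 1 := by
    have := congrFun (congrFun hS.1 1) 0
    simpa [conjTranspose_apply] using this.symm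
  have hc0 : 0 < S 1 1 := by
    exact hS.diag_pos
  set D := S 0 0 * S 1 1 - S 0 1 ^ 2 with hDdef
  have hD : 0 < D := by
    have h := hS.det_pos
    rw [Matrix.det_fin_two, hsym0] at h
    nlinarith [h]
  have hinv : ∀ k, GInv D (gaussStep^[k] S) := by
    intro k; induction k with
    | zero => exact ⟨hsym0, hc0, rfl⟩
    | succ n ih => rw [Function.iterate_succ_apply']; exact (ginv_step hD ih).1
  have hb : ∀ k, |2 * (gaussStep^[k+1] S) 0 1| ≤ (gaussStep^[k+1] S) 0 0 := by
    intro k; rw [Function.iterate_succ_apply']; exact (ginv_step hD (hinv k)).2.1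
  have h00 : ∀ k, (gaussStep^[k+1] S) 0 0 = (gaussStep^[k] S) 1 1 := by
    intro k; rw [Function.iterate_succ_apply']; exact (ginv_step hD (hinv k)).2.2.1
  have hterm : ∃ k, (gaussStep^[k+1] S) 0 0 ≤ (gaussStep^[k+1] S) 1 1 := by
    by_contra hcon
    push_neg at hcon
    set c : ℕ → ℝ := fun k => (gaussStep^[k] S) 1 1 with hcdef
    have hcpos : ∀ k, 0 < c k := fun k => (hinv k).2.1
    have hdec : ∀ k, c (k+1) < c k := by
      intro k
      have h := hcon k
      rw [h00 k] at h; exact h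
    have h3 : ∀ k, 3 * c (k+1) < c k := by
      intro k
      set M := gaussStep^[k+1] S with hM
      have e11 := (ginv_step hD (hinv (k+1))).2.2.2
      have hgc : c (k+2) = M 0 0 + 2*((round (-(M 0 1)/M 1 1):ℤ):ℝ)*M 0 1
          + ((round (-(M 0 1)/M 1 1):ℤ):ℝ)^2 * M 1 1 := by
        show (gaussStep^[k+2] S) 1 1 = _
        rw [show k+2 = (k+1)+1 by ring, Function.iterate_succ_apply']
        exact e11
      have hlt : M 1 1 < M 0 0 := hcon k
      have h2 : M 0 0 + 2*((round (-(M 0 1)/M 1 1):ℤ):ℝ)*M 0 1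
          + ((round (-(M 0 1)/M 1 1):ℤ):ℝ)^2 * M 1 1 < M 1 1 := by
        rw [← hgc]; exact hdec (k+1)
      have := key_arith (M 0 0) (M 0 1) (M 1 1) (round (-(M 0 1)/M 1 1))
        (hinv (k+1)).2.1 (hb k) hlt h2
      calc 3 * c (k+1) = 3 * M 1 1 := rfl
      _ < M 0 0 := this
      _ = c k := h00 k
    have hle : ∀ k, c k ≤ c 0 / 3^k := by
      intro k; induction k with
      | zero => simp
      | succ n ih =>
        have h := h3 n
        have h9 : (0:ℝ) < 3^n := by positivity
        rw [pow_succ]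
        rw [div_mul_eq_div_div]
        have : c (n+1) ≤ c n / 3 := by linarith
        calc c (n+1) ≤ c n / 3 := this
        _ ≤ c 0 / 3^n / 3 := by
          apply div_le_div_of_nonneg_right ?_ (by norm_num)
          exact ih
        _ = _ := rfl
    have hlow : ∀ k, D ≤ c k * c (k+1) := by
      intro k
      have hdet := (hinv (k+1)).2.2
      have h0 := h00 k
      show D ≤ (gaussStep^[k] S) 1 1 * (gaussStep^[k+1] S) 1 1
      rw [h0] at hdet
      nlinarith [sq_nonneg ((gaussStep^[k+1] S) 0 1)]
    have hmon : ∀ k, c k ≤ c 0 := by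
      intro k; induction k with
      | zero => exact le_refl _
      | succ n ih => exact le_trans (le_of_lt (hdec n)) ih
    obtain ⟨n, hn⟩ := pow_unbounded_of_one_lt (c 0 * c 0 / D) (by norm_num : (1:ℝ) < 3)
    have h9 : (0:ℝ) < 3^n := by positivity
    have hup : D ≤ (c 0 / 3^n) * c 0 := by
      calc D ≤ c n * c (n+1) := hlow n
      _ ≤ (c 0 / 3^n) * c 0 := by
        apply mul_le_mul (hle n) (hmon (n+1)) (le_of_lt (hcpos (n+1)))
        positivity
    rw [div_lt_iff₀ hD] at hn
    rw [div_mul_eq_mul_div, le_div_iff₀ h9] at hup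
    nlinarith [hn, hup]
  obtain ⟨k, hk⟩ := hterm
  set M := gaussStep^[k+1] S with hM
  have hbk : |2 * M 0 1| ≤ M 0 0 := hb k
  have hsymM : M 1 0 = M 0 1 := (hinv (k+1)).1
  refine ⟨k+1, if M 0 1 ≤ 0 then 1 else -1, ?_, hk, ?_⟩
  · split <;> simp
  · rcases le_or_gt (M 0 1) 0 with h0 | h0
    · rw [if_pos h0]
      exact final M hsymM hbk hk 1 (Or.inl ⟨rfl, h0⟩)
    · rw [if_neg (not_le.2 h0)]
      exact final M hsymM hbk hk (-1) (Or.inr ⟨rfl, h0⟩)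
end
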